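/- Let X be a cancellative convex cone (an additive commutative monoid with a module structure over ℝ≥0 satisfying the cancellation law). Then there exist a real vector space V and an injective map f : X → V such that f(x + y) = f(x) + f(y) and f(c • x) = c • f(x) for all x, y in X and c in ℝ≥0, and moreover every element of V can be written as f(y) − f(z) with y, z in X. -/

import Mathlib

open scoped NNReal

namespace Stmt10Aux

set_option linter.unusedSectionVars false

variable {X : Type u} [AddCancelCommMonoid X]

def rel (p q : X × X) : Prop := p.1 + q.2 = q.1 + p.2

theorem rel_trans {p q r : X × X} (h1 : rel p q) (h2 : rel q r) : rel p r := by
  have h : (p.1 + r.2) + (q.1 + q.2) = (r.1 + p.2) + (q.1 + q.2) := by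
    calc (p.1 + r.2) + (q.1 + q.2) = (p.1 + q.2) + (q.1 + r.2) := by abel
    _ = (q.1 + p.2) + (r.1 + q.2) := by rw [h1, h2]
    _ = (r.1 + p.2) + (q.1 + q.2) := by abel
  exact add_right_cancel h

def coneSetoid (X : Type u) [AddCancelCommMonoid X] : Setoid (X × X) where
  r := rel
  iseqv := ⟨fun _ => rfl, fun h => h.symm, rel_trans⟩

def G (X : Type u) [AddCancelCommMonoid X] : Type u := Quotient (coneSetoid X)

def mk (p : X × X) : G X := Quotient.mk (coneSetoid X) p

theorem mk_eq {p q : X × X} (h : p.1 + q.2 = q.1 + p.2) : mk p = mk q :=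
  Quotient.sound h

theorem mk_eq_iff {p q : X × X} : mk p = mk q ↔ p.1 + q.2 = q.1 + p.2 :=
  ⟨Quotient.exact, mk_eq⟩

instance : Add (G X) :=
  ⟨Quotient.map₂ (fun p q => (p.1 + q.1, p.2 + q.2)) (by
    rintro ⟨a, b⟩ ⟨a', b'⟩ (h1 : a + b' = a' + b) ⟨c, d⟩ ⟨c', d'⟩ (h2 : c + d' = c' + d)
    show a + c + (b' + d') = a' + c' + (b + d)
    calc a + c + (b' + d') = (a + b') + (c + d') := by abel
    _ = (a' + b) + (c' + d) := by rw [h1, h2]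
    _ = a' + c' + (b + d) := by abel)⟩

instance : Zero (G X) := ⟨mk (0, 0)⟩

instance : Neg (G X) :=
  ⟨Quotient.map (fun p => (p.2, p.1)) (by
    rintro ⟨a, b⟩ ⟨a', b'⟩ (h : a + b' = a' + b)
    show b + a' = b' + a
    rw [add_comm, add_comm b' a, ← h])⟩

theorem mk_add (p q : X × X) : mk p + mk q = mk (p.1 + q.1, p.2 + q.2) := rfl

theorem mk_neg (p : X × X) : -(mk p) = mk (p.2, p.1) := rfl

instance : AddCommGroup (G X) where
  add_assoc := by
    rintro ⟨⟨a, b⟩⟩ ⟨⟨c, d⟩⟩ ⟨⟨e, f⟩⟩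
    exact mk_eq (by show a + c + e + (b + (d + f)) = a + (c + e) + (b + d + f); abel)
  zero_add := by rintro ⟨⟨a, b⟩⟩; exact mk_eq (by show 0 + a + b = a + (0 + b); abel)
  add_zero := by rintro ⟨⟨a, b⟩⟩; exact mk_eq (by show a + 0 + b = a + (b + 0); abel)
  add_comm := by rintro ⟨⟨a, b⟩⟩ ⟨⟨c, d⟩⟩; exact mk_eq (by show a + c + (d + b) = c + a + (b + d); abel)
  neg_add_cancel := by rintro ⟨⟨a, b⟩⟩; exact mk_eq (by show b + a + 0 = 0 + (a + b); abel)
  nsmul := nsmulRec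
  zsmul := zsmulRec

theorem mk_sub (p q : X × X) : mk p - mk q = mk (p.1 + q.2, p.2 + q.1) := by
  rw [sub_eq_add_neg, mk_neg, mk_add]

-- real identities
theorem diff_toNNReal (r : ℝ) : (r.toNNReal : ℝ) - ((-r).toNNReal : ℝ) = r := by
  rw [Real.coe_toNNReal', Real.coe_toNNReal']
  rcases le_total r 0 with h | h
  · rw [max_eq_right h, max_eq_left (neg_nonneg.2 h)]; ring
  · rw [max_eq_left h, max_eq_right (neg_nonpos.2 h)]; ring

theorem key_mul (r s : ℝ) :
    (r * s).toNNReal + r.toNNReal * (-s).toNNReal + (-r).toNNReal * s.toNNReal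
      = (-(r * s)).toNNReal + r.toNNReal * s.toNNReal + (-r).toNNReal * (-s).toNNReal := by
  have h1 := diff_toNNReal r
  have h2 := diff_toNNReal s
  have h3 := diff_toNNReal (r * s)
  have h4 : ((r.toNNReal : ℝ) - ((-r).toNNReal : ℝ)) * ((s.toNNReal : ℝ) - ((-s).toNNReal : ℝ))
      = r * s := by rw [h1, h2]
  apply NNReal.coe_injective
  push_cast
  linear_combination h3 - h4

theorem key_add (r s : ℝ) :
    (r + s).toNNReal + (-r).toNNReal + (-s).toNNReal
      = (-(r + s)).toNNReal + r.toNNReal + s.toNNReal := by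
  have h1 := diff_toNNReal r
  have h2 := diff_toNNReal s
  have h3 := diff_toNNReal (r + s)
  apply NNReal.coe_injective
  push_cast
  linear_combination h3 - h1 - h2

variable [Module ℝ≥0 X]

noncomputable def rsmul (r : ℝ) : G X → G X :=
  Quotient.map (fun p => (r.toNNReal • p.1 + (-r).toNNReal • p.2,
                          r.toNNReal • p.2 + (-r).toNNReal • p.1)) (by
    rintro ⟨a, b⟩ ⟨a', b'⟩ (h : a + b' = a' + b)
    show r.toNNReal • a + (-r).toNNReal • b + (r.toNNReal • b' + (-r).toNNReal • a')
       = r.toNNReal • a' + (-r).toNNReal • b' + (r.toNNReal • b + (-r).toNNReal • a)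
    calc _ = r.toNNReal • (a + b') + (-r).toNNReal • (a' + b) := by
            simp only [smul_add]; abel
    _ = r.toNNReal • (a' + b) + (-r).toNNReal • (a + b') := by rw [h]
    _ = _ := by simp only [smul_add]; abel)

theorem rsmul_mk (r : ℝ) (p : X × X) :
    rsmul r (mk p) = mk (r.toNNReal • p.1 + (-r).toNNReal • p.2,
                         r.toNNReal • p.2 + (-r).toNNReal • p.1) := rfl

noncomputable instance : Module ℝ (G X) where
  smul r := rsmul r
  one_smul := by
    rintro ⟨⟨a, b⟩⟩
    show rsmul 1 (mk (a, b)) = mk (a, b)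
    rw [rsmul_mk, Real.toNNReal_one, Real.toNNReal_of_nonpos (by norm_num : (-1:ℝ) ≤ 0)]
    simp
  mul_smul r s := by
    rintro ⟨⟨a, b⟩⟩
    show rsmul (r * s) (mk (a, b)) = rsmul r (rsmul s (mk (a, b)))
    rw [rsmul_mk, rsmul_mk, rsmul_mk]
    apply mk_eq
    show (r * s).toNNReal • a + (-(r * s)).toNNReal • b +
        (r.toNNReal • (s.toNNReal • b + (-s).toNNReal • a) +
         (-r).toNNReal • (s.toNNReal • a + (-s).toNNReal • b)) = _
    simp only [smul_add, ← mul_smul]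
    have k1 := key_mul r s
    calc _ = ((r * s).toNNReal + r.toNNReal * (-s).toNNReal + (-r).toNNReal * s.toNNReal) • a
            + ((-(r*s)).toNNReal + r.toNNReal * s.toNNReal + (-r).toNNReal * (-s).toNNReal) • b := by
            simp only [add_smul]; abel
    _ = ((-(r * s)).toNNReal + r.toNNReal * s.toNNReal + (-r).toNNReal * (-s).toNNReal) • a
            + ((r*s).toNNReal + r.toNNReal * (-s).toNNReal + (-r).toNNReal * s.toNNReal) • b := by
            rw [k1]
    _ = _ := by simp only [add_smul]; abel
  smul_zero r := by
    show rsmul r (mk (0, 0)) = mk (0, 0)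
    rw [rsmul_mk]; simp
  smul_add r := by
    rintro ⟨⟨a, b⟩⟩ ⟨⟨c, d⟩⟩
    show rsmul r (mk (a, b) + mk (c, d)) = rsmul r (mk (a, b)) + rsmul r (mk (c, d))
    rw [mk_add, rsmul_mk, rsmul_mk, rsmul_mk, mk_add]
    apply mk_eq
    simp only [smul_add]
    abel
  add_smul r s := by
    rintro ⟨⟨a, b⟩⟩
    show rsmul (r + s) (mk (a, b)) = rsmul r (mk (a, b)) + rsmul s (mk (a, b))
    rw [rsmul_mk, rsmul_mk, rsmul_mk, mk_add]
    apply mk_eq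
    have k := key_add r s
    show (r + s).toNNReal • a + (-(r + s)).toNNReal • b +
        ((r.toNNReal • b + (-r).toNNReal • a) + (s.toNNReal • b + (-s).toNNReal • a)) = _
    calc _ = ((r + s).toNNReal + (-r).toNNReal + (-s).toNNReal) • a
          + ((-(r+s)).toNNReal + r.toNNReal + s.toNNReal) • b := by
            simp only [add_smul]; abel
    _ = ((-(r + s)).toNNReal + r.toNNReal + s.toNNReal) • a
          + ((r+s).toNNReal + (-r).toNNReal + (-s).toNNReal) • b := by rw [k]
    _ = _ := by simp only [add_smul]; abel
  zero_smul := by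
    rintro ⟨⟨a, b⟩⟩
    show rsmul 0 (mk (a, b)) = mk (0, 0)
    rw [rsmul_mk]; simp

end Stmt10Aux

/-- A cancellative convex cone `X` embeds isomorphically (injectively, additively and
`ℝ≥0`-homogeneously) into a real vector space `V`, in which every element is the formal
difference of two elements of the image of `X`. -/
theorem stmt_10 (X : Type u) [AddCancelCommMonoid X] [Module ℝ≥0 X] :
    ∃ (V : Type u) (_ : AddCommGroup V) (_ : Module ℝ V) (f : X → V),
      Function.Injective f ∧
      (∀ x y : X, f (x + y) = f x + f y) ∧
      (∀ (c : ℝ≥0) (x : X), f (c • x) = (c : ℝ) • f x) ∧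
      (∀ v : V, ∃ y z : X, v = f y - f z) := by
  classical
  refine ⟨Stmt10Aux.G X, inferInstance, inferInstance, fun x => Stmt10Aux.mk (x, 0),
    ?_, ?_, ?_, ?_⟩
  · intro x y h
    have := Stmt10Aux.mk_eq_iff.1 h
    simpa using this
  · intro x y
    rw [Stmt10Aux.mk_add]
    exact Stmt10Aux.mk_eq (by simp)
  · intro c x
    show _ = Stmt10Aux.rsmul (c : ℝ) _
    rw [Stmt10Aux.rsmul_mk]
    apply Stmt10Aux.mk_eq
    simp [Real.toNNReal_coe, Real.toNNReal_of_nonpos (neg_nonpos.2 c.coe_nonneg)]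
  · rintro ⟨⟨y, z⟩⟩
    refine ⟨y, z, ?_⟩
    rw [Stmt10Aux.mk_sub]
    exact Stmt10Aux.mk_eq (by simp [add_comm])
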